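/- For any n×n complex matrix A, the matrix A + iA* is normal, and for every j: √2·s_j(Re(A) + Im(A)) ≤ s_j(A + iA*) ≤ 2·s_j(Re(A) + Im(A)), where Re(A) = (A + A*)/2 and Im(A) = (A − A*)/(2i). -/

import Mathlib

open Matrix
open scoped ComplexOrder

/-- The `j`-th largest singular value of a square complex matrix (`j : Fin m`, zero-indexed,
so `sv A 0` is the largest singular value). It is defined as the square root of the `j`-th
largest eigenvalue of `Aᴴ * A`. -/
noncomputable def sv {m : ℕ} (A : Matrix (Fin m) (Fin m) ℂ) (j : Fin m) : ℝ :=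
  Real.sqrt ((Matrix.isHermitian_conjTranspose_mul_self A).eigenvalues
    (Tuple.sort ((Matrix.isHermitian_conjTranspose_mul_self A).eigenvalues) j.rev))

/-- The positive semidefinite square root (the older Mathlib definition, removed since). -/
noncomputable def Matrix.PosSemidef.sqrt {m : ℕ} {A : Matrix (Fin m) (Fin m) ℂ} (hA : A.PosSemidef) :
    Matrix (Fin m) (Fin m) ℂ :=
  hA.1.eigenvectorUnitary.1 * diagonal ((↑) ∘ (√·) ∘ hA.1.eigenvalues) *
    (star hA.1.eigenvectorUnitary : Matrix (Fin m) (Fin m) ℂ)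

open scoped MatrixOrder in
theorem Matrix.PosSemidef.posSemidef_sqrt {m : ℕ} {A : Matrix (Fin m) (Fin m) ℂ}
    (hA : A.PosSemidef) : hA.sqrt.PosSemidef := by
  have h : hA.sqrt = cfc Real.sqrt A := by
    rw [hA.1.cfc_eq]; rfl
  rw [h, ← Matrix.nonneg_iff_posSemidef]
  exact cfc_nonneg (fun x _ => Real.sqrt_nonneg x)

/-- The absolute value `|A| = (Aᴴ A)^{1/2}` of a square complex matrix. -/
noncomputable def matAbs {m : ℕ} (A : Matrix (Fin m) (Fin m) ℂ) : Matrix (Fin m) (Fin m) ℂ :=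
  (Matrix.posSemidef_conjTranspose_mul_self A).sqrt

/-- The `2n × 2n` block matrix `[[A, B], [C, D]]`, reindexed by `Fin (n + n)`. -/
noncomputable def blk {n : ℕ} (A B C D : Matrix (Fin n) (Fin n) ℂ) :
    Matrix (Fin (n + n)) (Fin (n + n)) ℂ :=
  Matrix.reindex finSumFinEquiv finSumFinEquiv (Matrix.fromBlocks A B C D)

/-- `f(P)` for a Hermitian matrix `P`, via the spectral functional calculus. -/
noncomputable def herCfc {m : ℕ} {P : Matrix (Fin m) (Fin m) ℂ} (hP : P.IsHermitian)
    (f : ℝ → ℝ) : Matrix (Fin m) (Fin m) ℂ :=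
  hP.cfc f

/-- `|A| ^ r` (real power of the absolute value), via the functional calculus. -/
noncomputable def matAbsPow {m : ℕ} (A : Matrix (Fin m) (Fin m) ℂ) (r : ℝ) :
    Matrix (Fin m) (Fin m) ℂ :=
  herCfc (Matrix.posSemidef_conjTranspose_mul_self A).posSemidef_sqrt.1 (fun t => t ^ r)

/-- `f(|A|)`, via the functional calculus. -/
noncomputable def matAbsCfc {m : ℕ} (A : Matrix (Fin m) (Fin m) ℂ) (f : ℝ → ℝ) :
    Matrix (Fin m) (Fin m) ℂ :=
  herCfc (Matrix.posSemidef_conjTranspose_mul_self A).posSemidef_sqrt.1 f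

/-- The operator norm: the largest singular value. -/
noncomputable def opNorm {m : ℕ} (A : Matrix (Fin m) (Fin m) ℂ) : ℝ :=
  ⨆ j, sv A j

section Aux
open Polynomial

lemma charpoly_conj_aux {m : ℕ} (U V M : Matrix (Fin m) (Fin m) ℂ)
    (hUV : U * V = 1) (hVU : V * U = 1) : (U * M * V).charpoly = M.charpoly := by
  have hmapUV : U.map (C : ℂ →+* ℂ[X]) * V.map C = 1 := by
    rw [← Matrix.map_mul, hUV]; simp
  have hmapVU : V.map (C : ℂ →+* ℂ[X]) * U.map C = 1 := by
    rw [← Matrix.map_mul, hVU]; simp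
  have hscal : ∀ W : Matrix (Fin m) (Fin m) ℂ[X],
      Matrix.scalar (Fin m) (X : ℂ[X]) * W = W * Matrix.scalar (Fin m) (X : ℂ[X]) := by
    intro W
    ext i j
    simp [Matrix.scalar, Matrix.diagonal_mul, Matrix.mul_diagonal, mul_comm]
  have key : charmatrix (U * M * V) = U.map C * charmatrix M * V.map C := by
    unfold charmatrix
    simp only [RingHom.mapMatrix_apply, Matrix.map_mul]
    rw [Matrix.mul_sub, Matrix.sub_mul]
    congr 1
    rw [← hscal, Matrix.mul_assoc, hmapUV, Matrix.mul_one]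
  rw [Matrix.charpoly, key, Matrix.det_mul, Matrix.det_mul, Matrix.charpoly]
  have : (U.map (C : ℂ →+* ℂ[X])).det * (V.map C).det = 1 := by
    rw [← Matrix.det_mul, hmapUV, Matrix.det_one]
  calc (U.map (C : ℂ →+* ℂ[X])).det * (charmatrix M).det * (V.map C).det
      = (charmatrix M).det * ((U.map C).det * (V.map C).det) := by ring
    _ = (charmatrix M).det := by rw [this, mul_one]

lemma roots_charpoly_diag_conj {m : ℕ} (U M : Matrix (Fin m) (Fin m) ℂ)
    (hU : U ∈ Matrix.unitaryGroup (Fin m) ℂ) (d : Fin m → ℝ)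
    (hM : M = U * Matrix.diagonal (fun i => (d i : ℂ)) * star U) :
    M.charpoly.roots = Finset.univ.val.map (fun i => (d i : ℂ)) := by
  have h1 : M.charpoly = (Matrix.diagonal (fun i => (d i : ℂ))).charpoly := by
    rw [hM]
    exact charpoly_conj_aux U (star U) _ (Matrix.mem_unitaryGroup_iff.mp hU)
      (Matrix.mem_unitaryGroup_iff'.mp hU)
  rw [h1, Matrix.charpoly_of_upperTriangular _ (Matrix.blockTriangular_diagonal _)]
  simp only [Matrix.diagonal_apply_eq]
  rw [show (∏ i : Fin m, (X - C ((d i : ℂ)))) =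
      ((Finset.univ.val.map fun i => (d i : ℂ)).map fun a => X - C a).prod by
    rw [Multiset.map_map]; rfl]
  exact roots_multiset_prod_X_sub_C _

-- sorted tuples with equal multisets are equal
lemma sorted_eq_of_multiset_eq {m : ℕ} (f g : Fin m → ℝ)
    (h : Finset.univ.val.map f = Finset.univ.val.map g) :
    f ∘ Tuple.sort f = g ∘ Tuple.sort g := by
  have hperm : (List.ofFn (f ∘ Tuple.sort f)).Perm (List.ofFn (g ∘ Tuple.sort g)) := by
    have h1 : (List.ofFn (f ∘ Tuple.sort f)).Perm (List.ofFn f) :=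
      (Tuple.sort f).ofFn_comp_perm f
    have h2 : (List.ofFn (g ∘ Tuple.sort g)).Perm (List.ofFn g) :=
      (Tuple.sort g).ofFn_comp_perm g
    have h3 : (List.ofFn f).Perm (List.ofFn g) := by
      rw [← Multiset.coe_eq_coe, ← Fin.univ_val_map, ← Fin.univ_val_map]
      exact h
    exact (h1.trans h3).trans h2.symm
  exact List.ofFn_injective <| List.Perm.eq_of_sortedLE
    ((List.sortedLE_ofFn_iff).mpr (Tuple.monotone_sort f))
    ((List.sortedLE_ofFn_iff).mpr (Tuple.monotone_sort g)) hperm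

lemma eig_sorted_congr {m : ℕ} {A B : Matrix (Fin m) (Fin m) ℂ} (h : A = B)
    (hA : A.IsHermitian) (hB : B.IsHermitian) (j : Fin m) :
    hA.eigenvalues (Tuple.sort hA.eigenvalues j) =
      hB.eigenvalues (Tuple.sort hB.eigenvalues j) := by
  subst h; rfl

-- eigenvalue multiset of a Hermitian matrix
lemma roots_charpoly_herm {m : ℕ} {M : Matrix (Fin m) (Fin m) ℂ} (hM : M.IsHermitian) :
    M.charpoly.roots = Finset.univ.val.map (fun i => (hM.eigenvalues i : ℂ)) :=
  roots_charpoly_diag_conj _ M (hM.eigenvectorUnitary).2 hM.eigenvalues hM.spectral_theorem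

lemma eig_sorted_smul {m : ℕ} {M : Matrix (Fin m) (Fin m) ℂ} (hM : M.IsHermitian)
    {r : ℝ} (hr : 0 ≤ r) (hM' : (((r : ℂ)) • M).IsHermitian) (j : Fin m) :
    hM'.eigenvalues (Tuple.sort hM'.eigenvalues j) =
      r * hM.eigenvalues (Tuple.sort hM.eigenvalues j) := by
  set F : Fin m → ℝ := fun i => r * hM.eigenvalues i with hF
  -- roots of charpoly of r • M, two ways
  have h2 : (r : ℂ) • M = (hM.eigenvectorUnitary : Matrix (Fin m) (Fin m) ℂ) *
      Matrix.diagonal (fun i => (F i : ℂ)) * star (hM.eigenvectorUnitary : Matrix (Fin m) (Fin m) ℂ) := by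
    conv_lhs => rw [hM.spectral_theorem, Unitary.conjStarAlgAut_apply]
    have hd : Matrix.diagonal (fun i => (F i : ℂ)) =
        (r : ℂ) • Matrix.diagonal (RCLike.ofReal ∘ hM.eigenvalues) := by
      funext i j
      rcases eq_or_ne i j with h | h <;>
        simp [h, Matrix.diagonal_apply, hF]
    rw [hd, Matrix.mul_smul, Matrix.smul_mul]
  have ha : ((r : ℂ) • M).charpoly.roots = Finset.univ.val.map (fun i => (hM'.eigenvalues i : ℂ)) :=
    roots_charpoly_herm hM'
  have hb : ((r : ℂ) • M).charpoly.roots = Finset.univ.val.map (fun i => (F i : ℂ)) :=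
    roots_charpoly_diag_conj _ _ (hM.eigenvectorUnitary).2 F h2
  have hmult : Finset.univ.val.map hM'.eigenvalues = Finset.univ.val.map F := by
    apply Multiset.map_injective (Complex.ofReal_injective)
    rw [Multiset.map_map, Multiset.map_map]
    exact ha.symm.trans hb
  have hsorted := sorted_eq_of_multiset_eq _ _ hmult
  have hmono1 : Monotone (F ∘ Tuple.sort F) := Tuple.monotone_sort F
  have hmono2 : Monotone (F ∘ Tuple.sort hM.eigenvalues) := by
    intro a b hab
    exact mul_le_mul_of_nonneg_left (Tuple.monotone_sort hM.eigenvalues hab) hr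
  have huniq : F ∘ Tuple.sort F = F ∘ Tuple.sort hM.eigenvalues :=
    Tuple.unique_monotone hmono1 hmono2
  have := congrFun (hsorted.trans huniq) j
  simpa using this

end Aux

theorem sv_add_I_smul_conjTranspose {n : ℕ} (A : Matrix (Fin n) (Fin n) ℂ) :
    (A + Complex.I • Aᴴ)ᴴ * (A + Complex.I • Aᴴ) =
        (A + Complex.I • Aᴴ) * (A + Complex.I • Aᴴ)ᴴ ∧
      ∀ j : Fin n,
        Real.sqrt 2 *
            sv ((2 : ℂ)⁻¹ • (A + Aᴴ) + (2 * Complex.I)⁻¹ • (A - Aᴴ)) j ≤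
          sv (A + Complex.I • Aᴴ) j ∧
        sv (A + Complex.I • Aᴴ) j ≤
          2 * sv ((2 : ℂ)⁻¹ • (A + Aᴴ) + (2 * Complex.I)⁻¹ • (A - Aᴴ)) j := by
  constructor
  · have hBH : (A + Complex.I • Aᴴ)ᴴ = Aᴴ - Complex.I • A := by
      rw [conjTranspose_add, conjTranspose_smul, conjTranspose_conjTranspose,
        Complex.star_def, Complex.conj_I, neg_smul, ← sub_eq_add_neg]
    rw [hBH]
    simp only [Matrix.sub_mul, Matrix.mul_sub, Matrix.add_mul, Matrix.mul_add,
      Matrix.mul_smul, Matrix.smul_mul, smul_sub, smul_add, smul_smul,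
      Complex.I_mul_I, neg_one_smul]
    abel
  · intro j
    set B := A + Complex.I • Aᴴ with hB
    set C := (2 : ℂ)⁻¹ • (A + Aᴴ) + (2 * Complex.I)⁻¹ • (A - Aᴴ) with hCdef
    have h2I : (2 * Complex.I)⁻¹ = -Complex.I / 2 := by
      rw [mul_inv, Complex.inv_I]; ring
    have key : C = ((1 - Complex.I)/2) • B := by
      rw [hCdef, hB, h2I]
      ext i k
      simp only [Matrix.add_apply, Matrix.sub_apply, Matrix.smul_apply, smul_eq_mul]
      linear_combination ((Aᴴ i k)/2) * Complex.I_sq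
    have hCC : Cᴴ * C = ((2⁻¹ : ℝ) : ℂ) • (Bᴴ * B) := by
      rw [key, conjTranspose_smul, Matrix.smul_mul, Matrix.mul_smul, smul_smul]
      congr 1
      simp only [Complex.star_def, map_div₀, map_sub, _root_.map_one, Complex.conj_I, map_ofNat]
      push_cast
      linear_combination (-(1:ℂ)/4) * Complex.I_sq
    have h' : (((2⁻¹ : ℝ) : ℂ) • (Bᴴ * B)).IsHermitian := hCC ▸ isHermitian_conjTranspose_mul_self C
    have hval : (Matrix.isHermitian_conjTranspose_mul_self C).eigenvalues
        (Tuple.sort ((Matrix.isHermitian_conjTranspose_mul_self C).eigenvalues) j.rev)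
        = 2⁻¹ * (Matrix.isHermitian_conjTranspose_mul_self B).eigenvalues
          (Tuple.sort ((Matrix.isHermitian_conjTranspose_mul_self B).eigenvalues) j.rev) :=
      (eig_sorted_congr hCC _ h' _).trans
        (eig_sorted_smul (Matrix.isHermitian_conjTranspose_mul_self B) (by norm_num) h' _)
    have hsvC : sv C j = Real.sqrt 2⁻¹ * sv B j := by
      rw [sv, sv, hval, Real.sqrt_mul (by norm_num)]
    have hBnn : 0 ≤ sv B j := Real.sqrt_nonneg _
    constructor
    · rw [hsvC, ← mul_assoc, ← Real.sqrt_mul (by norm_num), show (2:ℝ) * 2⁻¹ = 1 by norm_num,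
        Real.sqrt_one, one_mul]
    · rw [hsvC, ← mul_assoc]
      have h1 : (1:ℝ) ≤ 2 * Real.sqrt 2⁻¹ := by
        nlinarith [Real.sq_sqrt (by norm_num : (0:ℝ) ≤ 2⁻¹), Real.sqrt_nonneg (2⁻¹:ℝ)]
      nlinarith
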